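/- Let (W,S) be a Coxeter system, p, q two (I,J)-cosets with q ≤ p in the Bruhat order on double cosets. Then ℓ(q) ≤ ℓ(p), with equality if and only if q = p, where the length of an (I,J)-coset r is ℓ(r) = 2ℓ(max(r)) − ℓ(w_I) − ℓ(w_J). -/

import Mathlib

namespace CoxeterPaper

open CoxeterSystem

variable {B : Type*} {W : Type*} [Group W] {M : CoxeterMatrix B}

/-- The Bruhat order on a Coxeter group: the reflexive-transitive closure of the
relation `a < a * t` for `t` a reflection with length increasing. -/
def BruhatLE (cs : CoxeterSystem M W) (x y : W) : Prop :=
  Relation.ReflTransGen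
    (fun a b => (∃ t, cs.IsReflection t ∧ b = a * t) ∧ cs.length a < cs.length b) x y

/-- One step of the Demazure product with a simple reflection. -/
noncomputable def demStep (cs : CoxeterSystem M W) (x : W) (i : B) : W :=
  if cs.length x < cs.length (x * cs.simple i) then x * cs.simple i else x

/-- The Demazure product of `x` with the word `l`. -/
noncomputable def demWord (cs : CoxeterSystem M W) (x : W) (l : List B) : W :=
  l.foldl (demStep cs) x

/-- The Demazure product (Coxeter monoid product) of two elements: fold the
Demazure action of a reduced word of `y` onto `x`. -/
noncomputable def dem (cs : CoxeterSystem M W) (x y : W) : W :=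
  demWord cs x (Classical.choose (cs.exists_reduced_word y))

/-- The standard parabolic subgroup attached to a set of simple indices. -/
def parabolic (cs : CoxeterSystem M W) (I : Set B) : Subgroup W :=
  Subgroup.closure (cs.simple '' I)

/-- `I` is finitary if the parabolic subgroup `W_I` is finite. -/
def Finitary (cs : CoxeterSystem M W) (I : Set B) : Prop :=
  (parabolic cs I : Set W).Finite

/-- The double coset `W_I w W_J` as a subset of `W`. -/
def doset (cs : CoxeterSystem M W) (I J : Set B) (w : W) : Set W :=
  {x | ∃ a ∈ parabolic cs I, ∃ b ∈ parabolic cs J, x = a * w * b}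

/-- `p` is an `(I,J)`-double coset. -/
def IsDCoset (cs : CoxeterSystem M W) (I J : Set B) (p : Set W) : Prop :=
  ∃ w, p = doset cs I J w

/-- `m` is the Bruhat-minimal element of `p`. -/
def IsMinOf (cs : CoxeterSystem M W) (p : Set W) (m : W) : Prop :=
  m ∈ p ∧ ∀ x ∈ p, BruhatLE cs m x

/-- `m` is the Bruhat-maximal element of `p`. -/
def IsMaxOf (cs : CoxeterSystem M W) (p : Set W) (m : W) : Prop :=
  m ∈ p ∧ ∀ x ∈ p, BruhatLE cs x m

/-- `[I 0, …, I d]` is a singlestep expression. -/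
def IsSinglestep (I : ℕ → Set B) (d : ℕ) : Prop :=
  ∀ k < d, (∃ s, s ∉ I k ∧ I (k + 1) = insert s (I k)) ∨
    (∃ s, s ∈ I k ∧ I (k + 1) = I k \ {s})

/-- `p` is a path subordinate to the singlestep expression `[I 0, …, I d]`. -/
def IsSubPath (cs : CoxeterSystem M W) (I : ℕ → Set B) (d : ℕ) (p : ℕ → Set W) : Prop :=
  p 0 = doset cs (I 0) (I 0) 1 ∧
  (∀ i ≤ d, IsDCoset cs (I 0) (I i) (p i)) ∧
  ∀ k < d, (I k ⊆ I (k + 1) → p k ⊆ p (k + 1)) ∧ (I (k + 1) ⊆ I k → p (k + 1) ⊆ p k)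

/-- The Demazure product `w_{I_0} * w_{I_1} * ⋯ * w_{I_d}` of the longest elements
`wI 0, …, wI d`. -/
noncomputable def exprMax (cs : CoxeterSystem M W) (wI : ℕ → W) (d : ℕ) : W :=
  ((List.range d).map fun k => wI (k + 1)).foldl (dem cs) (wI 0)


section PermRep
open List

open scoped Classical

variable (cs : CoxeterSystem M W)

local prefix:100 "s" => cs.simple
local prefix:100 "π" => cs.wordProd
local prefix:100 "ℓ" => cs.length






/-- The sign-tracking permutation attached to a simple reflection. -/
noncomputable def eta (i : B) : Equiv.Perm (W × ℤˣ) :=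
  Function.Involutive.toPerm
    (fun p => (s i * p.1 * s i, if p.1 = s i then -p.2 else p.2))
    (by
      rintro ⟨t, ε⟩
      have h1 : s i * t * s i = s i ↔ t = s i := by
        constructor
        · intro h
          have := congrArg (fun x => s i * x * s i) h
          simpa [mul_assoc, cs.simple_mul_simple_cancel_left,
            cs.simple_mul_simple_cancel_right] using this
        · rintro rfl; simp [cs.simple_mul_simple_self]
      by_cases ht : t = s i
      · simp [ht, cs.simple_mul_simple_self, mul_assoc]
      · have : ¬ (s i * t * s i = s i) := fun h => ht (h1.mp h)
        simp only [this, if_neg ht, if_neg this]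
        simp [mul_assoc, cs.simple_mul_simple_cancel_left, ← mul_assoc,
          cs.simple_mul_simple_cancel_right])

lemma eta_apply (i : B) (t : W) (ε : ℤˣ) :
    eta cs i (t, ε) = (s i * t * s i, if t = s i then -ε else ε) := rfl

lemma prod_map_eta (ω : List B) (t : W) (ε : ℤˣ) :
    ((ω.map (eta cs)).prod) (t, ε) =
      (π ω * t * (π ω)⁻¹, ε * (-1) ^ ((cs.rightInvSeq ω).count t)) := by
  induction ω generalizing t ε with
  | nil => simp
  | cons i ω ih =>
    rw [List.map_cons, List.prod_cons, Equiv.Perm.mul_apply, ih, eta_apply]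
    have hcond : (π ω * t * (π ω)⁻¹ = s i) ↔ ((π ω)⁻¹ * s i * π ω = t) := by
      constructor
      · intro h; rw [← h]; group
      · intro h; rw [← h]; group
    have hris : cs.rightInvSeq (i :: ω) = ((π ω)⁻¹ * s i * π ω) :: cs.rightInvSeq ω := rfl
    rw [hris]
    have hw : π (i :: ω) * t * (π (i :: ω))⁻¹ = s i * (π ω * t * (π ω)⁻¹) * s i := by
      rw [cs.wordProd_cons]; group
      simp [cs.inv_simple, zpow_neg_one]
    by_cases hc : (π ω)⁻¹ * s i * π ω = t
    · rw [if_pos (hcond.mpr hc)]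
      rw [Prod.ext_iff]
      constructor
      · exact hw.symm
      · show -(ε * (-1) ^ _) = ε * (-1) ^ List.count t (_ :: _)
        simp only [List.count_cons, beq_iff_eq, if_pos hc]
        rw [pow_succ]
        simp [mul_comm, mul_assoc, mul_left_comm]
    · rw [if_neg (fun h => hc (hcond.mp h))]
      rw [Prod.ext_iff]
      constructor
      · exact hw.symm
      · show (ε * (-1) ^ _) = ε * (-1) ^ List.count t (_ :: _)
        simp only [List.count_cons, beq_iff_eq, if_neg hc, add_zero]



/-- The alternating word `[i, j, i, j, ...]` of length `n`. -/
def altL (i j : B) (n : ℕ) : List B :=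
  (List.range n).map (fun k => if k % 2 = 0 then i else j)

lemma altL_succ (i j : B) (n : ℕ) :
    altL i j (n + 1) = altL i j n ++ [if n % 2 = 0 then i else j] := by
  simp [altL, List.range_succ]

lemma pi_altL (i j : B) (n : ℕ) :
    π (altL i j n) = (s i * s j) ^ (n / 2) * (if n % 2 = 0 then 1 else s i) := by
  induction n with
  | zero => simp [altL]
  | succ n ih =>
    rw [altL_succ, cs.wordProd_append, ih]
    rcases Nat.even_or_odd n with he | ho
    · have h2 : n % 2 = 0 := Nat.even_iff.mp he
      have h3 : (n+1) % 2 = 1 := by omega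
      have h4 : (n+1) / 2 = n / 2 := by omega
      simp [h2, h3, h4]
    · have h2 : n % 2 = 1 := Nat.odd_iff.mp ho
      have h3 : (n+1) % 2 = 0 := by omega
      have h4 : (n+1) / 2 = n / 2 + 1 := by omega
      simp only [h2, h3, h4]
      simp [pow_succ, mul_assoc]

lemma simple_mul_pow (i j : B) (r : ℕ) :
    s i * (s i * s j) ^ r = ((s i * s j) ^ r)⁻¹ * s i := by
  have h1 : s i * (s i * s j) * (s i)⁻¹ = (s i * s j)⁻¹ := by
    rw [cs.inv_simple, mul_inv_rev, cs.inv_simple, cs.inv_simple]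
    simp [mul_assoc, cs.simple_mul_simple_cancel_left]
  have h2 : s i * (s i * s j) ^ r * (s i)⁻¹ = ((s i * s j)⁻¹) ^ r := by
    rw [← conj_pow, h1]
  calc s i * (s i * s j) ^ r
      = (s i * (s i * s j) ^ r * (s i)⁻¹) * s i := by group
    _ = ((s i * s j) ^ r)⁻¹ * s i := by rw [h2, inv_pow]

lemma pow_mul_simple (i j : B) (r : ℕ) :
    (s i * s j) ^ r * s i = s i * ((s i * s j) ^ r)⁻¹ := by
  have h1 : s i * (s i * s j)⁻¹ * (s i)⁻¹ = s i * s j := by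
    simp [mul_inv_rev, cs.inv_simple, mul_assoc, cs.simple_mul_simple_self]
  have h2 : s i * ((s i * s j)⁻¹) ^ r * (s i)⁻¹ = (s i * s j) ^ r := by
    rw [← conj_pow, h1]
  calc (s i * s j) ^ r * s i
      = s i * ((s i * s j)⁻¹) ^ r * (s i)⁻¹ * s i := by rw [h2]
    _ = s i * ((s i * s j) ^ r)⁻¹ := by rw [inv_pow]; group

lemma conj_altL (i j : B) (k : ℕ) :
    π (altL i j k) * s (if k % 2 = 0 then i else j) * (π (altL i j k))⁻¹ =
      (s i * s j) ^ k * s i := by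
  rcases Nat.even_or_odd k with he | ho
  · have h2 : k % 2 = 0 := Nat.even_iff.mp he
    have h4 : k / 2 + k / 2 = k := by omega
    have h4' : (s i * s j) ^ (k / 2) * (s i * s j) ^ (k / 2) = (s i * s j) ^ k := by
      rw [← pow_add, h4]
    rw [pi_altL cs, h2]
    simp only [if_true, reduceIte, mul_one]
    rw [mul_assoc, ← pow_mul_simple cs, ← mul_assoc, h4']
  · have h2 : k % 2 = 1 := Nat.odd_iff.mp ho
    have h4' : (s i * s j) ^ (k / 2) * ((s i * s j) * (s i * s j) ^ (k / 2)) = (s i * s j) ^ k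
        := by
      rw [← pow_succ', ← pow_add]
      congr 1
      omega
    rw [pi_altL cs, h2]
    simp only [one_ne_zero, reduceIte]
    rw [mul_inv_rev, cs.inv_simple]
    calc (s i * s j) ^ (k / 2) * s i * s j * (s i * ((s i * s j) ^ (k / 2))⁻¹)
        = (s i * s j) ^ (k / 2) * ((s i * s j) * (s i * ((s i * s j) ^ (k / 2))⁻¹)) := by
          group
      _ = (s i * s j) ^ (k / 2) * ((s i * s j) * ((s i * s j) ^ (k / 2) * s i)) := by
          rw [← pow_mul_simple cs]
      _ = (s i * s j) ^ k * s i := by rw [← mul_assoc, ← mul_assoc, mul_assoc _ _ ((s i * s j) ^ (k/2)), h4']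
          

lemma ris_getD_of_pi_eq_one {ω : List B} (hπ : π ω = 1) (k : ℕ) (hk : k < ω.length) :
    (cs.rightInvSeq ω).getD k 1 =
      π (ω.take k) * s (ω.get ⟨k, hk⟩) * (π (ω.take k))⁻¹ := by
  have hsplit : π (ω.take (k + 1)) * π (ω.drop (k + 1)) = 1 := by
    rw [← cs.wordProd_append, List.take_append_drop, hπ]
  have htake : ω.take (k + 1) = ω.take k ++ [ω.get ⟨k, hk⟩] := by
    rw [← List.take_concat_get hk]
    simp
  have h5 : π (ω.take (k + 1)) = π (ω.take k) * s (ω.get ⟨k, hk⟩) := by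
    rw [htake, cs.wordProd_append, cs.wordProd_singleton]
  have hd : π (ω.drop (k + 1)) = (π (ω.take k) * s (ω.get ⟨k, hk⟩))⁻¹ := by
    rw [← h5]
    exact eq_inv_of_mul_eq_one_right hsplit
  rw [cs.getD_rightInvSeq, hd]
  have hget : ω[k]? = some (ω.get ⟨k, hk⟩) := List.getElem?_eq_getElem hk
  rw [hget]
  simp only [Option.map_some, Option.getD_some, inv_inv]
  simp [mul_inv_rev, cs.inv_simple, mul_assoc, cs.simple_mul_simple_cancel_left]

lemma ris_altL (i j : B) (m : ℕ) (hrel : (s i * s j) ^ m = 1) :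
    cs.rightInvSeq (altL i j (2 * m)) =
      ((List.range m).map fun k => (s i * s j) ^ k * s i) ++
      ((List.range m).map fun k => (s i * s j) ^ k * s i) := by
  have hlen : (altL i j (2 * m)).length = 2 * m := by simp [altL]
  have hπ : π (altL i j (2 * m)) = 1 := by
    rw [pi_altL cs]
    have h1 : 2 * m % 2 = 0 := by omega
    have h2 : 2 * m / 2 = m := by omega
    simp [h1, h2, hrel]
  apply List.ext_getElem
  · simp only [cs.length_rightInvSeq, hlen, List.length_append, List.length_map,
      List.length_range]
    omega
  intro k hk1 hk2
  have hk : k < 2 * m := by simpa [cs.length_rightInvSeq, hlen] using hk1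
  have hgetD : (cs.rightInvSeq (altL i j (2*m)))[k]'hk1 =
      (cs.rightInvSeq (altL i j (2*m))).getD k 1 := by
    rw [List.getD_eq_getElem _ _ hk1]
  rw [hgetD, ris_getD_of_pi_eq_one cs hπ k (by omega : k < (altL i j (2*m)).length)]
  have htake : (altL i j (2 * m)).take k = altL i j k := by
    simp [altL, ← List.map_take, List.take_range, Nat.min_eq_left hk.le]
  have hgetk : (altL i j (2 * m)).get ⟨k, by omega⟩ = if k % 2 = 0 then i else j := by
    simp [altL]
  rw [htake, hgetk, conj_altL cs]
  rcases Nat.lt_or_ge k m with hkm | hkm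
  · rw [List.getElem_append_left (by simpa using hkm)]
    simp
  · have hkm2 : k - m < m := by omega
    rw [List.getElem_append_right (by simpa using hkm)]
    simp only [List.getElem_map, List.getElem_range, List.length_map, List.length_range]
    have hk3 : k = (k - m) + m := by omega
    have hpow : (s i * s j) ^ k = (s i * s j) ^ (k - m) := by
      conv_lhs => rw [hk3]
      rw [pow_add, hrel, mul_one]
    rw [hpow]

lemma prod_eta_altL (i j : B) (n : ℕ) :
    ((altL i j n).map (eta cs)).prod =
      (eta cs i * eta cs j) ^ (n / 2) *
        (if n % 2 = 0 then 1 else eta cs i) := by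
  induction n with
  | zero => simp [altL]
  | succ n ih =>
    rw [altL_succ, List.map_append, List.prod_append, ih]
    rcases Nat.even_or_odd n with he | ho
    · have h2 : n % 2 = 0 := Nat.even_iff.mp he
      have h3 : (n+1) % 2 = 1 := by omega
      have h4 : (n+1) / 2 = n / 2 := by omega
      simp [h2, h3, h4]
    · have h2 : n % 2 = 1 := Nat.odd_iff.mp ho
      have h3 : (n+1) % 2 = 0 := by omega
      have h4 : (n+1) / 2 = n / 2 + 1 := by omega
      simp only [h2, h3, h4, one_ne_zero, reduceIte]
      simp [pow_succ, mul_assoc]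

lemma eta_liftable : M.IsLiftable (eta cs) := by
  intro i j
  have h1 : 2 * M i j % 2 = 0 := by omega
  have h2 : 2 * M i j / 2 = M i j := by omega
  have hπ : π (altL i j (2 * M i j)) = 1 := by
    rw [pi_altL cs, h1, h2]
    simp [cs.simple_mul_simple_pow i j]
  have key : (eta cs i * eta cs j) ^ (M i j) = ((altL i j (2 * M i j)).map (eta cs)).prod := by
    rw [prod_eta_altL cs, h1, h2]
    simp
  rw [key]
  apply Equiv.ext
  rintro ⟨t, ε⟩
  rw [prod_map_eta, ris_altL cs i j _ (cs.simple_mul_simple_pow i j), List.count_append, hπ]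
  have heven : ε * (-1 : ℤˣ) ^
      (((List.range (M i j)).map fun k => (s i * s j) ^ k * s i).count t +
       ((List.range (M i j)).map fun k => (s i * s j) ^ k * s i).count t) = ε := by
    rw [Even.neg_one_pow ⟨_, rfl⟩, mul_one]
  rw [heven]
  simp

/-- The sign-tracking homomorphism. -/
noncomputable def mu : W →* Equiv.Perm (W × ℤˣ) := cs.lift ⟨eta cs, eta_liftable cs⟩

lemma mu_simple (i : B) : mu cs (s i) = eta cs i := cs.lift_apply_simple (eta_liftable cs) i

lemma mu_wordProd (ω : List B) : mu cs (π ω) = ((ω.map (eta cs)).prod) := by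
  induction ω with
  | nil => simp [cs.wordProd_nil]
  | cons i ω ih => rw [cs.wordProd_cons, map_mul, mu_simple, List.map_cons, List.prod_cons, ih]

lemma mu_apply_of_wordProd {w : W} {ω : List B} (h : π ω = w) (t : W) (ε : ℤˣ) :
    mu cs w (t, ε) = (w * t * w⁻¹, ε * (-1) ^ ((cs.rightInvSeq ω).count t)) := by
  subst h
  rw [mu_wordProd, prod_map_eta]

/-- The sign of the reflection `t` at `w`. -/
noncomputable def csgn (w t : W) : ℤˣ := (mu cs w (t, 1)).2

lemma csgn_count (ω : List B) (t : W) :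
    csgn cs (π ω) t = (-1) ^ ((cs.rightInvSeq ω).count t) := by
  unfold csgn
  rw [mu_apply_of_wordProd cs rfl, one_mul]

lemma mu_apply (w t : W) (ε : ℤˣ) :
    mu cs w (t, ε) = (w * t * w⁻¹, ε * csgn cs w t) := by
  obtain ⟨ω, _, rfl⟩ := cs.exists_reduced_word w
  rw [mu_apply_of_wordProd cs rfl, csgn_count]

lemma csgn_mul (w₁ w₂ t : W) :
    csgn cs (w₁ * w₂) t = csgn cs w₂ t * csgn cs w₁ (w₂ * t * w₂⁻¹) := by
  unfold csgn
  rw [map_mul, Equiv.Perm.mul_apply, mu_apply cs w₂ t 1, mu_apply cs w₁ (w₂ * t * w₂⁻¹)]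
  simp only [one_mul]
  rw [mul_comm]
  show _ * csgn cs w₂ t = _
  rw [show (((mu cs) w₁) (w₂ * t * w₂⁻¹, 1)).2 = csgn cs w₁ (w₂ * t * w₂⁻¹) from rfl,
    mul_comm]

lemma csgn_one (t : W) : csgn cs 1 t = 1 := by
  unfold csgn
  rw [map_one]
  rfl

lemma csgn_simple_self (i : B) : csgn cs (s i) (s i) = -1 := by
  unfold csgn
  rw [mu_simple, eta_apply, if_pos rfl]

lemma csgn_refl_self {t : W} (ht : cs.IsReflection t) : csgn cs t t = -1 := by
  obtain ⟨v, i, rfl⟩ := ht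
  set t := v * s i * v⁻¹ with hT
  have hvt : v⁻¹ * t * (v⁻¹)⁻¹ = s i := by rw [hT]; group
  have h1 : csgn cs (v * s i * v⁻¹) t = csgn cs v⁻¹ t * csgn cs (v * s i) (s i) := by
    rw [csgn_mul cs (v * s i) v⁻¹ t, hvt]
  have h2 : csgn cs (v * s i) (s i) = csgn cs (s i) (s i) * csgn cs v (s i) := by
    have : s i * s i * (s i)⁻¹ = s i := by group
    rw [csgn_mul cs v (s i) (s i), this]
  have h3 : csgn cs v (s i) * csgn cs v⁻¹ t = 1 := by
    have := csgn_mul cs v⁻¹ v (s i)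
    rw [inv_mul_cancel] at this
    rw [csgn_one] at this
    have hv : v * s i * v⁻¹ = t := rfl
    rw [hv] at this
    exact this.symm
  rw [h1, h2, csgn_simple_self]
  calc csgn cs v⁻¹ t * (-1 * csgn cs v (s i))
      = -1 * (csgn cs v (s i) * csgn cs v⁻¹ t) := by
        rw [mul_comm (csgn cs v⁻¹ t) _, mul_assoc]
    _ = -1 := by rw [h3, mul_one]

lemma csgn_neg_one_iff {t : W} (ht : cs.IsReflection t) (w : W) :
    csgn cs w t = -1 ↔ ℓ (w * t) < ℓ w := by
  have dir : ∀ u : W, csgn cs u t = -1 → ℓ (u * t) < ℓ u := by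
    intro u hu
    obtain ⟨ω, hred, rfl⟩ := cs.exists_reduced_word' u
    rw [csgn_count] at hu
    have hodd : Odd ((cs.rightInvSeq ω).count t) := by
      rcases Nat.even_or_odd ((cs.rightInvSeq ω).count t) with he | ho
      · rw [Even.neg_one_pow he] at hu
        exact absurd hu (by decide)
      · exact ho
    have hmem : t ∈ cs.rightInvSeq ω := by
      rcases Nat.eq_zero_or_pos ((cs.rightInvSeq ω).count t) with h0 | hpos
      · rw [h0] at hodd; exact absurd hodd (by decide)
      · exact List.count_pos_iff.mp hpos
    exact (cs.isRightInversion_of_mem_rightInvSeq hred hmem).2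
  constructor
  · exact dir w
  · intro hlen
    rcases Int.units_eq_one_or (csgn cs w t) with h1 | h1
    · exfalso
      have h2 : csgn cs (w * t) t = -1 := by
        have h3 : t * t * t⁻¹ = t := by rw [ht.mul_self, one_mul, ht.inv]
        rw [csgn_mul cs w t t, h3, csgn_refl_self cs ht, h1]
        simp
      have := dir (w * t) h2
      rw [mul_assoc, ht.mul_self, mul_one] at this
      omega
    · exact h1

/-- Strong exchange property. -/
lemma strong_exchange {ω : List B} (hω : cs.IsReduced ω) {t : W} (ht : cs.IsReflection t)
    (hlt : ℓ (π ω * t) < ℓ (π ω)) :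
    ∃ j, ∃ h : j < ω.length, π ω * t = π (ω.eraseIdx j) := by
  have hsgn : csgn cs (π ω) t = -1 := (csgn_neg_one_iff cs ht (π ω)).mpr hlt
  rw [csgn_count] at hsgn
  have hmem : t ∈ cs.rightInvSeq ω := by
    rcases Nat.eq_zero_or_pos ((cs.rightInvSeq ω).count t) with h0 | hpos
    · rw [h0] at hsgn; exact absurd hsgn (by decide)
    · exact List.count_pos_iff.mp hpos
  obtain ⟨j, hj, hjt⟩ := List.mem_iff_getElem.mp hmem
  rw [cs.length_rightInvSeq] at hj
  refine ⟨j, hj, ?_⟩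
  have := cs.wordProd_mul_getD_rightInvSeq ω j
  rw [List.getD_eq_getElem _ 1 (by rw [cs.length_rightInvSeq]; exact hj), hjt] at this
  exact this


lemma bruhatLE_length_le {x y : W} (h : BruhatLE cs x y) : ℓ x ≤ ℓ y := by
  induction h with
  | refl => exact le_refl _
  | tail _ hstep ih => exact ih.trans (le_of_lt hstep.2)

lemma bruhatLE_eq_of_length_ge {x y : W} (h : BruhatLE cs x y) (hl : ℓ y ≤ ℓ x) : x = y := by
  rcases Relation.ReflTransGen.cases_head h with heq | ⟨c, hxc, hcy⟩
  · exact heq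
  · exfalso
    have h1 := bruhatLE_length_le cs hcy
    have h2 := hxc.2
    omega

lemma bruhatLE_antisymm {x y : W} (h1 : BruhatLE cs x y) (h2 : BruhatLE cs y x) : x = y :=
  bruhatLE_eq_of_length_ge cs h1 (bruhatLE_length_le cs h2)

lemma bruhatLE_step {x y : W} {t : W} (ht : cs.IsReflection t) (hxy : y = x * t)
    (hl : ℓ x < ℓ y) : BruhatLE cs x y :=
  Relation.ReflTransGen.single ⟨⟨t, ht, hxy⟩, hl⟩

lemma bruhatLE_simple_step {x : W} {i : B} (hl : ℓ (x * s i) < ℓ x) :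
    BruhatLE cs (x * s i) x := by
  apply bruhatLE_step cs (cs.isReflection_simple i)
    (by rw [mul_assoc, cs.simple_mul_simple_self, mul_one]) hl

lemma bruhatLE_trans {x y z : W} (h1 : BruhatLE cs x y) (h2 : BruhatLE cs y z) :
    BruhatLE cs x z := Relation.ReflTransGen.trans h1 h2

/-- The forced covering configuration. -/
lemma cover_forced {y z : W} {i : B} (hdesc : ℓ (y * s i) < ℓ y) {t : W}
    (ht : cs.IsReflection t) (hz : z = y * t) (hlen : ℓ z + 1 = ℓ y)
    (hasc : ℓ z < ℓ (z * s i)) : z * s i = y := by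
  obtain ⟨ω₁, hred₁, hys⟩ := cs.exists_reduced_word' (y * s i)
  have hω₁len : ω₁.length = ℓ (y * s i) := by rw [hys]; exact hred₁.symm
  have hπω : π (ω₁ ++ [i]) = y := by
    rw [cs.wordProd_append, ← hys, cs.wordProd_singleton, mul_assoc,
      cs.simple_mul_simple_self, mul_one]
  have hdesc' : ℓ (y * s i) + 1 = ℓ y := by
    rcases cs.length_mul_simple y i with h | h
    · omega
    · exact h
  have hred : cs.IsReduced (ω₁ ++ [i]) := by
    unfold CoxeterSystem.IsReduced
    rw [hπω, List.length_append, List.length_singleton, hω₁len]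
    omega
  have hlt : ℓ (π (ω₁ ++ [i]) * t) < ℓ (π (ω₁ ++ [i])) := by
    rw [hπω, ← hz]
    omega
  obtain ⟨j, hj, hjt⟩ := strong_exchange cs hred ht hlt
  have hz2 : z = π ((ω₁ ++ [i]).eraseIdx j) := by rw [hz, ← hπω]; exact hjt
  rw [List.length_append, List.length_singleton] at hj
  by_cases hjl : j = ω₁.length
  · have herase : (ω₁ ++ [i]).eraseIdx j = ω₁ := by
      rw [hjl, List.eraseIdx_append_of_length_le (le_refl _), Nat.sub_self]
      simp
    rw [herase] at hz2
    rw [hz2, ← hys, mul_assoc, cs.simple_mul_simple_self, mul_one]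
  · have hjlt : j < ω₁.length := by omega
    exfalso
    have herase : (ω₁ ++ [i]).eraseIdx j = ω₁.eraseIdx j ++ [i] := by
      rw [List.eraseIdx_append_of_lt_length hjlt]
    rw [herase, cs.wordProd_append, cs.wordProd_singleton] at hz2
    have hzs : z * s i = π (ω₁.eraseIdx j) := by
      rw [hz2, mul_assoc, cs.simple_mul_simple_self, mul_one]
    have hlen2 : ℓ (z * s i) ≤ ω₁.length - 1 := by
      rw [hzs]
      calc ℓ (π (ω₁.eraseIdx j)) ≤ (ω₁.eraseIdx j).length := cs.length_wordProd_le _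
        _ = ω₁.length - 1 := by rw [List.length_eraseIdx]; simp [hjlt]
    omega

/-- Joint lifting and monotonicity property, proven by induction on Bruhat chains. -/
lemma lifting_and_mono {x y : W} (h : BruhatLE cs x y) (i : B) :
    (ℓ (y * s i) < ℓ y → BruhatLE cs (x * s i) y) ∧
      (ℓ x < ℓ (x * s i) → ℓ y < ℓ (y * s i) → BruhatLE cs (x * s i) (y * s i)) := by
  induction h with
  | refl =>
    constructor
    · intro hd
      exact bruhatLE_simple_step cs hd
    · intro _ _
      exact Relation.ReflTransGen.refl
  | @tail z y hxz hstep ih =>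
    obtain ⟨⟨t, ht, rfl⟩, hlt⟩ := hstep
    have hstepzy : BruhatLE cs z (z * t) := bruhatLE_step cs ht rfl hlt
    constructor
    · intro hd
      by_cases hzs : ℓ (z * s i) < ℓ z
      · exact bruhatLE_trans cs (ih.1 hzs) hstepzy
      · have hzs' : ℓ z < ℓ (z * s i) :=
          lt_of_le_of_ne (not_lt.mp hzs) (Ne.symm (cs.length_mul_simple_ne z i))
        by_cases hxs : ℓ (x * s i) < ℓ x
        · exact bruhatLE_trans cs (bruhatLE_trans cs (bruhatLE_simple_step cs hxs) hxz)
            hstepzy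
        · have hxs' : ℓ x < ℓ (x * s i) :=
            lt_of_le_of_ne (not_lt.mp hxs) (Ne.symm (cs.length_mul_simple_ne x i))
          have hM : BruhatLE cs (x * s i) (z * s i) := ih.2 hxs' hzs'
          have htconj : cs.IsReflection (s i * t * s i) := by
            have := ht.conj (s i)
            rwa [cs.inv_simple] at this
          have hprod : z * t * s i = (z * s i) * (s i * t * s i) := by
            group
            rw [mul_assoc z (s i) (s i), cs.simple_mul_simple_self, mul_one]
          have hne : ℓ (z * t * s i) ≠ ℓ (z * s i) := by
            rw [hprod]
            exact htconj.length_mul_left_ne (z * s i)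
          rcases lt_or_gt_of_ne hne with hcase | hcase
          · -- forced configuration: z * s i = z * t
            have hd' : ℓ (z * t * s i) + 1 = ℓ (z * t) := by
              rcases cs.length_mul_simple (z * t) i with h | h
              · omega
              · exact h
            have hzs2 : ℓ (z * s i) = ℓ z + 1 := by
              rcases cs.length_mul_simple z i with h | h
              · exact h
              · omega
            have hlenz : ℓ z + 1 = ℓ (z * t) := by omega
            have hcov : z * s i = z * t :=
              cover_forced cs hd ht
                (by rw [mul_assoc, ht.mul_self, mul_one] : z = z * t * t) hlenz hzs'
            rw [hcov] at hM
            exact hM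
          · -- z * s i ≤ z * t * s i ≤ z * t
            have hstep2 : BruhatLE cs (z * s i) (z * t * s i) :=
              bruhatLE_step cs htconj hprod hcase
            have hstep3 : BruhatLE cs (z * t * s i) (z * t) := bruhatLE_simple_step cs hd
            exact bruhatLE_trans cs hM (bruhatLE_trans cs hstep2 hstep3)
    · intro hxs hys
      by_cases hzs : ℓ z < ℓ (z * s i)
      · have hM : BruhatLE cs (x * s i) (z * s i) := ih.2 hxs hzs
        have htconj : cs.IsReflection (s i * t * s i) := by
          have := ht.conj (s i)
          rwa [cs.inv_simple] at this
        have hprod : z * t * s i = (z * s i) * (s i * t * s i) := by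
          group
          rw [mul_assoc z (s i) (s i), cs.simple_mul_simple_self, mul_one]
        have hzs2 : ℓ (z * s i) = ℓ z + 1 := by
          rcases cs.length_mul_simple z i with h | h
          · exact h
          · omega
        have hys2 : ℓ (z * t * s i) = ℓ (z * t) + 1 := by
          rcases cs.length_mul_simple (z * t) i with h | h
          · exact h
          · omega
        have hstep2 : BruhatLE cs (z * s i) (z * t * s i) :=
          bruhatLE_step cs htconj hprod (by omega)
        exact bruhatLE_trans cs hM hstep2
      · have hzs' : ℓ (z * s i) < ℓ z :=
          lt_of_le_of_ne (not_lt.mp hzs) (cs.length_mul_simple_ne z i)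
        have hL : BruhatLE cs (x * s i) z := ih.1 hzs'
        have hstep3 : BruhatLE cs (z * t) (z * t * s i) := by
          apply bruhatLE_step cs (cs.isReflection_simple i) rfl hys
        exact bruhatLE_trans cs hL (bruhatLE_trans cs hstepzy hstep3)

lemma bruhat_lifting_right {x y : W} (h : BruhatLE cs x y) {i : B}
    (hd : ℓ (y * s i) < ℓ y) : BruhatLE cs (x * s i) y :=
  (lifting_and_mono cs h i).1 hd

lemma bruhatLE_inv {x y : W} (h : BruhatLE cs x y) : BruhatLE cs x⁻¹ y⁻¹ := by
  induction h with
  | refl => exact Relation.ReflTransGen.refl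
  | @tail z y hxz hstep ih =>
    obtain ⟨⟨t, ht, rfl⟩, hlt⟩ := hstep
    refine Relation.ReflTransGen.tail ih ⟨⟨z * t * z⁻¹, ht.conj z, ?_⟩, ?_⟩
    · rw [mul_inv_rev, ht.inv]
      group
    · rw [cs.length_inv, cs.length_inv]
      exact hlt

lemma bruhat_lifting_left {x y : W} (h : BruhatLE cs x y) {i : B}
    (hd : ℓ (s i * y) < ℓ y) : BruhatLE cs (s i * x) y := by
  have h1 : BruhatLE cs x⁻¹ y⁻¹ := bruhatLE_inv cs h
  have hd' : ℓ (y⁻¹ * s i) < ℓ y⁻¹ := by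
    have : (y⁻¹ * s i) = (s i * y)⁻¹ := by rw [mul_inv_rev, cs.inv_simple]
    rw [this, cs.length_inv, cs.length_inv]
    exact hd
  have h2 := bruhat_lifting_right cs h1 hd'
  have h3 := bruhatLE_inv cs h2
  rwa [mul_inv_rev, cs.inv_simple, inv_inv, inv_inv] at h3

lemma simple_mem_parabolic {I : Set B} {i : B} (hi : i ∈ I) : s i ∈ parabolic cs I :=
  Subgroup.subset_closure (Set.mem_image_of_mem _ hi)

lemma mem_submonoid_of_mem_parabolic {I : Set B} {a : W} (ha : a ∈ parabolic cs I) :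
    a ∈ Submonoid.closure (cs.simple '' I) := by
  have hS : (cs.simple '' I)⁻¹ = cs.simple '' I := by
    ext x
    simp only [Set.mem_inv, Set.mem_image]
    constructor
    · rintro ⟨i, hi, hx⟩
      refine ⟨i, hi, ?_⟩
      rw [← inv_inv x, ← hx, cs.inv_simple]
    · rintro ⟨i, hi, rfl⟩
      exact ⟨i, hi, (cs.inv_simple i).symm⟩
  have h1 : (parabolic cs I).toSubmonoid = Submonoid.closure (cs.simple '' I ∪ (cs.simple '' I)⁻¹) :=
    Subgroup.closure_toSubmonoid _
  have h2 : cs.simple '' I ∪ (cs.simple '' I)⁻¹ = cs.simple '' I := by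
    rw [hS, Set.union_self]
  have : a ∈ (parabolic cs I).toSubmonoid := ha
  rwa [h1, h2] at this

lemma left_parabolic_bruhatLE {I : Set B} {Mp : W}
    (hdesc : ∀ i ∈ I, ℓ (s i * Mp) < ℓ Mp) {a : W} (ha : a ∈ parabolic cs I) :
    ∀ x, BruhatLE cs x Mp → BruhatLE cs (a * x) Mp := by
  have ha' := mem_submonoid_of_mem_parabolic cs ha
  clear ha
  induction ha' using Submonoid.closure_induction with
  | mem g hg =>
    obtain ⟨i, hi, rfl⟩ := hg
    intro x hx
    exact bruhat_lifting_left cs hx (hdesc i hi)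
  | one =>
    intro x hx
    rwa [one_mul]
  | mul g h _ _ ihg ihh =>
    intro x hx
    rw [mul_assoc]
    exact ihg _ (ihh _ hx)

lemma right_parabolic_bruhatLE {J : Set B} {Mp : W}
    (hdesc : ∀ j ∈ J, ℓ (Mp * s j) < ℓ Mp) {b : W} (hb : b ∈ parabolic cs J) :
    ∀ x, BruhatLE cs x Mp → BruhatLE cs (x * b) Mp := by
  have hb' := mem_submonoid_of_mem_parabolic cs hb
  clear hb
  induction hb' using Submonoid.closure_induction with
  | mem g hg =>
    obtain ⟨j, hj, rfl⟩ := hg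
    intro x hx
    exact bruhat_lifting_right cs hx (hdesc j hj)
  | one =>
    intro x hx
    rwa [mul_one]
  | mul g h _ _ ihg ihh =>
    intro x hx
    rw [← mul_assoc]
    exact ihh _ (ihg _ hx)

lemma mem_doset_self (I J : Set B) (u : W) : u ∈ doset cs I J u :=
  ⟨1, one_mem _, 1, one_mem _, by simp⟩

lemma doset_eq_of_mem {I J : Set B} {u x : W} (hx : x ∈ doset cs I J u) :
    doset cs I J x = doset cs I J u := by
  obtain ⟨a, ha, b, hb, rfl⟩ := hx
  ext y
  constructor
  · rintro ⟨a', ha', b', hb', rfl⟩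
    exact ⟨a' * a, mul_mem ha' ha, b * b', mul_mem hb hb', by group⟩
  · rintro ⟨a', ha', b', hb', rfl⟩
    exact ⟨a' * a⁻¹, mul_mem ha' (inv_mem ha), b⁻¹ * b', mul_mem (inv_mem hb) hb', by group⟩

end PermRep

/-- The Bruhat order on double cosets respects the length
`ℓ(r) = 2ℓ(max r) − ℓ(w_I) − ℓ(w_J)`: if `q ≤ p` then `ℓ(q) ≤ ℓ(p)`, with
equality iff `q = p`. -/
theorem doset_length_mono (cs : CoxeterSystem M W) (I J : Set B)
    (hI : Finitary cs I) (hJ : Finitary cs J) (wI wJ : W)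
    (hwI : IsMaxOf cs (parabolic cs I : Set W) wI)
    (hwJ : IsMaxOf cs (parabolic cs J : Set W) wJ)
    (u v mq mp Mq Mp : W)
    (hmq : IsMinOf cs (doset cs I J u) mq) (hmp : IsMinOf cs (doset cs I J v) mp)
    (hMq : IsMaxOf cs (doset cs I J u) Mq) (hMp : IsMaxOf cs (doset cs I J v) Mp)
    (hle : BruhatLE cs mq mp) :
    (2 * (cs.length Mq : ℤ) - cs.length wI - cs.length wJ) ≤
        2 * (cs.length Mp : ℤ) - cs.length wI - cs.length wJ ∧
      ((2 * (cs.length Mq : ℤ) - cs.length wI - cs.length wJ) =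
          2 * (cs.length Mp : ℤ) - cs.length wI - cs.length wJ ↔
        doset cs I J u = doset cs I J v) := by
  have hmpMp : BruhatLE cs mp Mp := hMp.2 mp hmp.1
  have hmqMp : BruhatLE cs mq Mp := bruhatLE_trans cs hle hmpMp
  have hdescI : ∀ i ∈ I, cs.length (cs.simple i * Mp) < cs.length Mp := by
    intro i hi
    have hmem : cs.simple i * Mp ∈ doset cs I J v := by
      obtain ⟨a, ha, b, hb, hM⟩ := hMp.1
      exact ⟨cs.simple i * a, mul_mem (simple_mem_parabolic cs hi) ha, b, hb,
        by rw [hM]; group⟩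
    have hle2 : BruhatLE cs (cs.simple i * Mp) Mp := hMp.2 _ hmem
    exact lt_of_le_of_ne (bruhatLE_length_le cs hle2) (cs.length_simple_mul_ne Mp i)
  have hdescJ : ∀ j ∈ J, cs.length (Mp * cs.simple j) < cs.length Mp := by
    intro j hj
    have hmem : Mp * cs.simple j ∈ doset cs I J v := by
      obtain ⟨a, ha, b, hb, hM⟩ := hMp.1
      exact ⟨a, ha, b * cs.simple j, mul_mem hb (simple_mem_parabolic cs hj),
        by rw [hM]; group⟩
    have hle2 : BruhatLE cs (Mp * cs.simple j) Mp := hMp.2 _ hmem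
    exact lt_of_le_of_ne (bruhatLE_length_le cs hle2) (cs.length_mul_simple_ne Mp j)
  have hMqmem : Mq ∈ doset cs I J mq := by
    rw [doset_eq_of_mem cs hmq.1]
    exact hMq.1
  obtain ⟨a, ha, b, hb, hMqeq⟩ := hMqmem
  have h1 : BruhatLE cs (mq * b) Mp := right_parabolic_bruhatLE cs hdescJ hb mq hmqMp
  have h2 : BruhatLE cs (a * (mq * b)) Mp := left_parabolic_bruhatLE cs hdescI ha _ h1
  have hMqMp : BruhatLE cs Mq Mp := by
    rw [hMqeq, mul_assoc]
    exact h2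
  have hlen : cs.length Mq ≤ cs.length Mp := bruhatLE_length_le cs hMqMp
  refine ⟨by omega, ?_, ?_⟩
  · intro heq
    have hlenEq : cs.length Mq = cs.length Mp := by omega
    have hMqMpEq : Mq = Mp := bruhatLE_eq_of_length_ge cs hMqMp (le_of_eq hlenEq.symm)
    have h3 : doset cs I J u = doset cs I J Mq := (doset_eq_of_mem cs hMq.1).symm
    have h4 : doset cs I J v = doset cs I J Mp := (doset_eq_of_mem cs hMp.1).symm
    rw [h3, h4, hMqMpEq]
  · intro heq
    have hMpmemU : Mp ∈ doset cs I J u := by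
      rw [heq]
      exact hMp.1
    have hMqmemV : Mq ∈ doset cs I J v := by
      rw [← heq]
      exact hMq.1
    have hMpMq : BruhatLE cs Mp Mq := hMq.2 Mp hMpmemU
    have : Mq = Mp := bruhatLE_antisymm cs hMqMp hMpMq
    rw [this]

end CoxeterPaper
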